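/- Let m₁, m₂ ≥ 1, let K₁ ∈ ℝ^{m₁×m₁} and K₂ ∈ ℝ^{m₂×m₂} be symmetric invertible, and let K = diag(K₁, K₂). Let M₁ ⊆ o(K₁) and M₂ ⊆ o(K₂) be abelian Lie subalgebras all of whose elements are nilpotent matrices. Then M = {diag(X₁, X₂) : X₁ ∈ M₁, X₂ ∈ M₂} is not a maximal abelian subalgebra of o(K). -/

import Mathlib

open Matrix

/-- `o(K)`: real matrices `X` with `XK + KXᵀ = 0`. -/
def oK {ι : Type*} [Fintype ι] (K : Matrix ι ι ℝ) : Set (Matrix ι ι ℝ) :=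
  {X | X * K + K * Xᵀ = 0}

/-- The extended matrix `E(X, a)` with block form `[[X, a], [0, 0]]`. -/
def Emat {ι : Type*} (X : Matrix ι ι ℝ) (a : ι → ℝ) :
    Matrix (ι ⊕ Unit) (ι ⊕ Unit) ℝ :=
  Matrix.fromBlocks X (Matrix.of fun i _ => a i) 0 0

/-- The Lie algebra `e(K)`, as a set of extended matrices. -/
def eK {ι : Type*} [Fintype ι] (K : Matrix ι ι ℝ) :
    Set (Matrix (ι ⊕ Unit) (ι ⊕ Unit) ℝ) :=
  {m | ∃ X ∈ oK K, ∃ a : ι → ℝ, m = Emat X a}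

/-- `M` is a maximal abelian subalgebra of the matrix Lie algebra (set) `L`:
it is a linear subspace contained in `L`, its elements pairwise commute, and
every element of `L` commuting with all of `M` belongs to `M`. -/
def IsMASA {κ : Type*} [Fintype κ] (L M : Set (Matrix κ κ ℝ)) : Prop :=
  M ⊆ L ∧
  (∀ X ∈ M, ∀ Y ∈ M, X * Y = Y * X) ∧
  (0 : Matrix κ κ ℝ) ∈ M ∧
  (∀ X ∈ M, ∀ Y ∈ M, X + Y ∈ M) ∧
  (∀ (c : ℝ), ∀ X ∈ M, c • X ∈ M) ∧
  (∀ Y ∈ L, (∀ X ∈ M, Y * X = X * Y) → Y ∈ M)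


/-- Restriction of a power is the power of the restriction. -/
lemma restrict_pow_apply {V : Type*} [AddCommGroup V] [Module ℝ V] {W : Submodule ℝ V}
    (f : Module.End ℝ V) (h : ∀ x ∈ W, f x ∈ W) (k : ℕ) (x : W) :
    (((f.restrict h) ^ k) x : V) = (f ^ k) (x : V) := by
  induction k generalizing x with
  | zero => simp
  | succ n ih =>
      rw [pow_succ, pow_succ]
      simp only [Module.End.mul_apply, ih, LinearMap.restrict_coe_apply]

/-- A commuting family of nilpotent endomorphisms of a nontrivial finite-dimensional
real vector space has a common nonzero kernel vector. -/
lemma exists_common_ker : ∀ (n : ℕ) (V : Type) [AddCommGroup V] [Module ℝ V]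
    [FiniteDimensional ℝ V], Module.finrank ℝ V = n → Nontrivial V →
    ∀ S : Set (Module.End ℝ V),
    (∀ f ∈ S, ∀ g ∈ S, f * g = g * f) →
    (∀ f ∈ S, IsNilpotent f) →
    ∃ v : V, v ≠ 0 ∧ ∀ f ∈ S, f v = 0 := by
  intro n
  induction n using Nat.strong_induction_on with
  | _ n ih =>
    intro V _ _ _ hrank hV S hcomm hnil
    by_cases h0 : ∀ f ∈ S, f = 0
    · obtain ⟨v, hv⟩ := exists_ne (0 : V)
      exact ⟨v, hv, fun f hf => by rw [h0 f hf]; rfl⟩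
    push_neg at h0
    obtain ⟨f₀, hf₀S, hf₀⟩ := h0
    set W := LinearMap.ker f₀ with hWdef
    -- W ≠ ⊥
    have hWbot : W ≠ ⊥ := by
      obtain ⟨x, hx⟩ := exists_ne (0 : V)
      obtain ⟨k, hk⟩ := hnil f₀ hf₀S
      have hex : ∃ j, (f₀ ^ j) x = 0 := ⟨k, by rw [hk]; rfl⟩
      classical
      set j := Nat.find hex with hj
      have hj0 : (f₀ ^ j) x = 0 := Nat.find_spec hex
      have hjpos : j ≠ 0 := by
        intro h
        rw [h] at hj0; simp at hj0; exact hx hj0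
      have hlt : ¬ (f₀ ^ (j - 1)) x = 0 :=
        Nat.find_min hex (Nat.sub_lt (Nat.pos_of_ne_zero hjpos) one_pos)
      have hmem : (f₀ ^ (j - 1)) x ∈ W := by
        rw [hWdef, LinearMap.mem_ker]
        have hj1 : j - 1 + 1 = j := Nat.succ_pred_eq_of_pos (Nat.pos_of_ne_zero hjpos)
        have : f₀ ((f₀ ^ (j - 1)) x) = (f₀ ^ j) x := by
          rw [← Module.End.mul_apply, ← pow_succ', hj1]
        rw [this, hj0]
      intro hbot
      rw [hbot, Submodule.mem_bot] at hmem
      exact hlt hmem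
    -- W ≠ ⊤
    have hWtop : W < ⊤ := by
      rcases lt_or_eq_of_le (le_top : W ≤ ⊤) with h | h
      · exact h
      · exfalso
        apply hf₀
        ext x
        have : x ∈ W := h ▸ Submodule.mem_top
        simpa [hWdef] using this
    have hinv : ∀ f ∈ S, ∀ x ∈ W, f x ∈ W := by
      intro f hf x hx
      rw [hWdef, LinearMap.mem_ker] at hx ⊢
      have := hcomm f hf f₀ hf₀S
      calc f₀ (f x) = (f₀ * f) x := rfl
        _ = (f * f₀) x := by rw [← this]
        _ = f (f₀ x) := rfl
        _ = 0 := by rw [hx, map_zero]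
    haveI : Nontrivial W := Submodule.nontrivial_iff_ne_bot.mpr hWbot
    have hrk : Module.finrank ℝ W < n := hrank ▸ Submodule.finrank_lt hWtop.ne
    set S' : Set (Module.End ℝ W) :=
      {g | ∃ f : Module.End ℝ V, ∃ hf : f ∈ S, g = f.restrict (hinv f hf)} with hS'
    obtain ⟨w, hw0, hwker⟩ := ih _ hrk W rfl inferInstance S'
      (by
        rintro _ ⟨f, hf, rfl⟩ _ ⟨g, hg, rfl⟩
        ext x
        have h := hcomm f hf g hg
        calc ((f.restrict (hinv f hf) * g.restrict (hinv g hg)) x : V)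
            = f (g (x : V)) := by
              simp [Module.End.mul_apply, LinearMap.restrict_coe_apply]
          _ = (f * g) (x : V) := rfl
          _ = (g * f) (x : V) := by rw [h]
          _ = g (f (x : V)) := rfl
          _ = ((g.restrict (hinv g hg) * f.restrict (hinv f hf)) x : V) := by
              simp [Module.End.mul_apply, LinearMap.restrict_coe_apply])
      (by
        rintro _ ⟨f, hf, rfl⟩
        obtain ⟨k, hk⟩ := hnil f hf
        exact ⟨k, by
          ext x
          rw [restrict_pow_apply]
          simp [hk]⟩)
    refine ⟨(w : V), by simpa using hw0, ?_⟩
    intro f hf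
    have := hwker (f.restrict (hinv f hf)) ⟨f, hf, rfl⟩
    have := congrArg (Subtype.val) this
    rwa [LinearMap.restrict_coe_apply] at this

/-- Matrix version of the common-kernel lemma. -/
lemma matrix_common_ker {m : ℕ} (hm : 1 ≤ m) (S : Set (Matrix (Fin m) (Fin m) ℝ))
    (hcomm : ∀ X ∈ S, ∀ Y ∈ S, X * Y = Y * X)
    (hnil : ∀ X ∈ S, IsNilpotent X) :
    ∃ v : Fin m → ℝ, v ≠ 0 ∧ ∀ X ∈ S, X *ᵥ v = 0 := by
  haveI : Nonempty (Fin m) := ⟨⟨0, hm⟩⟩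
  haveI : Nontrivial (Fin m → ℝ) := inferInstance
  set S' : Set (Module.End ℝ (Fin m → ℝ)) := (Matrix.toLinAlgEquiv' : _ ≃ₐ[ℝ] _) '' S
  obtain ⟨v, hv, hker⟩ := exists_common_ker (Module.finrank ℝ (Fin m → ℝ)) (Fin m → ℝ)
    rfl inferInstance S'
    (by
      rintro _ ⟨X, hX, rfl⟩ _ ⟨Y, hY, rfl⟩
      rw [← _root_.map_mul, ← _root_.map_mul, hcomm X hX Y hY])
    (by
      rintro _ ⟨X, hX, rfl⟩
      exact (hnil X hX).map Matrix.toLinAlgEquiv')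
  refine ⟨v, hv, fun X hX => ?_⟩
  have := hker (Matrix.toLinAlgEquiv' X) ⟨X, hX, rfl⟩
  rwa [Matrix.toLinAlgEquiv'_apply] at this

lemma vecMulVec_mul' {ι κ : Type*} [Fintype κ] (v : ι → ℝ) (u : κ → ℝ) (X : Matrix κ κ ℝ) :
    vecMulVec v u * X = vecMulVec v (Xᵀ *ᵥ u) := by
  ext i j
  simp only [Matrix.mul_apply, Matrix.vecMulVec_apply, Matrix.mulVec, dotProduct,
    Matrix.transpose_apply, Finset.mul_sum, Finset.sum_mul]
  exact Finset.sum_congr rfl fun k _ => by ring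

lemma mul_vecMulVec' {ι κ : Type*} [Fintype ι] (X : Matrix ι ι ℝ) (v : ι → ℝ) (u : κ → ℝ) :
    X * vecMulVec v u = vecMulVec (X *ᵥ v) u := by
  ext i j
  simp only [Matrix.mul_apply, Matrix.vecMulVec_apply, Matrix.mulVec, dotProduct,
    Finset.mul_sum, Finset.sum_mul]
  exact Finset.sum_congr rfl fun k _ => by ring

lemma vecMulVec_transpose' {ι κ : Type*} (v : ι → ℝ) (u : κ → ℝ) :
    (vecMulVec v u)ᵀ = vecMulVec u v := by
  ext i j
  simp [Matrix.vecMulVec_apply, mul_comm]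

lemma vecMulVec_zero_right {ι κ : Type*} (v : ι → ℝ) :
    vecMulVec v (0 : κ → ℝ) = 0 := by
  ext i j; simp [Matrix.vecMulVec_apply]

lemma vecMulVec_zero_left {ι κ : Type*} (u : κ → ℝ) :
    vecMulVec (0 : ι → ℝ) u = 0 := by
  ext i j; simp [Matrix.vecMulVec_apply]

theorem stmt9 (m₁ m₂ : ℕ) (h₁ : 1 ≤ m₁) (h₂ : 1 ≤ m₂)
    (K₁ : Matrix (Fin m₁) (Fin m₁) ℝ) (K₂ : Matrix (Fin m₂) (Fin m₂) ℝ)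
    (hs₁ : K₁ᵀ = K₁) (hi₁ : IsUnit K₁) (hs₂ : K₂ᵀ = K₂) (hi₂ : IsUnit K₂)
    (M₁ : Set (Matrix (Fin m₁) (Fin m₁) ℝ)) (M₂ : Set (Matrix (Fin m₂) (Fin m₂) ℝ))
    (hM₁sub : M₁ ⊆ oK K₁)
    (hM₁ab : ∀ X ∈ M₁, ∀ Y ∈ M₁, X * Y = Y * X)
    (hM₁0 : (0 : Matrix (Fin m₁) (Fin m₁) ℝ) ∈ M₁)
    (hM₁add : ∀ X ∈ M₁, ∀ Y ∈ M₁, X + Y ∈ M₁)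
    (hM₁smul : ∀ (c : ℝ), ∀ X ∈ M₁, c • X ∈ M₁)
    (hM₁nil : ∀ X ∈ M₁, IsNilpotent X)
    (hM₂sub : M₂ ⊆ oK K₂)
    (hM₂ab : ∀ X ∈ M₂, ∀ Y ∈ M₂, X * Y = Y * X)
    (hM₂0 : (0 : Matrix (Fin m₂) (Fin m₂) ℝ) ∈ M₂)
    (hM₂add : ∀ X ∈ M₂, ∀ Y ∈ M₂, X + Y ∈ M₂)
    (hM₂smul : ∀ (c : ℝ), ∀ X ∈ M₂, c • X ∈ M₂)
    (hM₂nil : ∀ X ∈ M₂, IsNilpotent X) :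
    ¬ IsMASA (oK (Matrix.fromBlocks K₁ 0 0 K₂))
      {m | ∃ X₁ ∈ M₁, ∃ X₂ ∈ M₂, m = Matrix.fromBlocks X₁ 0 0 X₂} := by
  rintro ⟨hsub, hab, h0, hadd, hsmul, hmax⟩
  obtain ⟨v₁, hv₁, hker₁⟩ := matrix_common_ker h₁ M₁ hM₁ab hM₁nil
  obtain ⟨v₂, hv₂, hker₂⟩ := matrix_common_ker h₂ M₂ hM₂ab hM₂nil
  have hd₁ : IsUnit K₁.det := (Matrix.isUnit_iff_isUnit_det K₁).mp hi₁
  have hd₂ : IsUnit K₂.det := (Matrix.isUnit_iff_isUnit_det K₂).mp hi₂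
  set u₁ := K₁⁻¹ *ᵥ v₁ with hu₁
  set u₂ := K₂⁻¹ *ᵥ v₂ with hu₂
  have hKu₁ : K₁ *ᵥ u₁ = v₁ := by
    rw [hu₁, mulVec_mulVec, Matrix.mul_nonsing_inv _ hd₁, one_mulVec]
  have hKu₂ : K₂ *ᵥ u₂ = v₂ := by
    rw [hu₂, mulVec_mulVec, Matrix.mul_nonsing_inv _ hd₂, one_mulVec]
  -- transposes of elements kill u₁, u₂
  have hkerT₁ : ∀ X ∈ M₁, Xᵀ *ᵥ u₁ = 0 := by
    intro X hX
    have hX' : X * K₁ + K₁ * Xᵀ = 0 := hM₁sub hX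
    have h1 : K₁ * Xᵀ = -(X * K₁) := eq_neg_of_add_eq_zero_right hX'
    have h2 : K₁ *ᵥ (Xᵀ *ᵥ u₁) = 0 := by
      rw [mulVec_mulVec, h1, Matrix.neg_mulVec, ← mulVec_mulVec, hKu₁, hker₁ X hX, neg_zero]
    have h3 := congrArg (fun w => K₁⁻¹ *ᵥ w) h2
    have h4 : K₁⁻¹ * (K₁ * Xᵀ) = Xᵀ := by
      rw [← Matrix.mul_assoc, Matrix.nonsing_inv_mul _ hd₁, Matrix.one_mul]
    simpa [mulVec_mulVec, h4] using h3
  have hkerT₂ : ∀ X ∈ M₂, Xᵀ *ᵥ u₂ = 0 := by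
    intro X hX
    have hX' : X * K₂ + K₂ * Xᵀ = 0 := hM₂sub hX
    have h1 : K₂ * Xᵀ = -(X * K₂) := eq_neg_of_add_eq_zero_right hX'
    have h2 : K₂ *ᵥ (Xᵀ *ᵥ u₂) = 0 := by
      rw [mulVec_mulVec, h1, Matrix.neg_mulVec, ← mulVec_mulVec, hKu₂, hker₂ X hX, neg_zero]
    have h3 := congrArg (fun w => K₂⁻¹ *ᵥ w) h2
    have h4 : K₂⁻¹ * (K₂ * Xᵀ) = Xᵀ := by
      rw [← Matrix.mul_assoc, Matrix.nonsing_inv_mul _ hd₂, Matrix.one_mul]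
    simpa [mulVec_mulVec, h4] using h3
  set A := vecMulVec v₁ u₂ with hA
  set B := -(vecMulVec v₂ u₁) with hB
  set Y := Matrix.fromBlocks (0 : Matrix (Fin m₁) (Fin m₁) ℝ) A B 0 with hY
  -- Y ∈ oK (fromBlocks K₁ 0 0 K₂)
  have hAK : A * K₂ = vecMulVec v₁ v₂ := by
    rw [hA, vecMulVec_mul', hs₂, hKu₂]
  have hKB : K₁ * Bᵀ = -(vecMulVec v₁ v₂) := by
    rw [hB, Matrix.transpose_neg, vecMulVec_transpose', Matrix.mul_neg, mul_vecMulVec', hKu₁]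
  have hBK : B * K₁ = -(vecMulVec v₂ v₁) := by
    rw [hB, Matrix.neg_mul, vecMulVec_mul', hs₁, hKu₁]
  have hKA : K₂ * Aᵀ = vecMulVec v₂ v₁ := by
    rw [hA, vecMulVec_transpose', mul_vecMulVec', hKu₂]
  have hYoK : Y ∈ oK (Matrix.fromBlocks K₁ 0 0 K₂) := by
    show Y * Matrix.fromBlocks K₁ 0 0 K₂ + Matrix.fromBlocks K₁ 0 0 K₂ * Yᵀ = 0
    rw [hY, Matrix.fromBlocks_transpose, Matrix.fromBlocks_multiply, Matrix.fromBlocks_multiply,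
      Matrix.fromBlocks_add]
    simp only [Matrix.mul_zero, Matrix.zero_mul, add_zero, zero_add, Matrix.transpose_zero,
      hAK, hKB, hBK, hKA]
    simp
  -- Y commutes with everything in M
  have hYcomm : ∀ X ∈ {m | ∃ X₁ ∈ M₁, ∃ X₂ ∈ M₂, m = Matrix.fromBlocks X₁ 0 0 X₂},
      Y * X = X * Y := by
    rintro _ ⟨X₁, hX₁, X₂, hX₂, rfl⟩
    rw [hY, Matrix.fromBlocks_multiply, Matrix.fromBlocks_multiply]
    have e1 : A * X₂ = 0 := by rw [hA, vecMulVec_mul', hkerT₂ X₂ hX₂, vecMulVec_zero_right]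
    have e2 : B * X₁ = 0 := by
      rw [hB, Matrix.neg_mul, vecMulVec_mul', hkerT₁ X₁ hX₁, vecMulVec_zero_right, neg_zero]
    have e3 : X₁ * A = 0 := by rw [hA, mul_vecMulVec', hker₁ X₁ hX₁, vecMulVec_zero_left]
    have e4 : X₂ * B = 0 := by
      rw [hB, Matrix.mul_neg, mul_vecMulVec', hker₂ X₂ hX₂, vecMulVec_zero_left, neg_zero]
    simp [e1, e2, e3, e4]
  have hYM := hmax Y hYoK hYcomm
  obtain ⟨Z₁, _, Z₂, _, hEq⟩ := hYM
  -- contradiction: top-right block of Y is nonzero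
  obtain ⟨i, hi⟩ := Function.ne_iff.mp hv₁
  have hu₂ne : u₂ ≠ 0 := by
    intro h
    rw [h, Matrix.mulVec_zero] at hKu₂
    exact hv₂ hKu₂.symm
  obtain ⟨j, hj⟩ := Function.ne_iff.mp hu₂ne
  have := congrFun (congrFun hEq (Sum.inl i)) (Sum.inr j)
  rw [hY] at this
  simp only [Matrix.fromBlocks_apply₁₂, hA, Matrix.vecMulVec_apply, Matrix.zero_apply] at this
  exact mul_ne_zero (by simpa using hi) (by simpa using hj) this
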